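/- Let τ ≠ μ be distributions over {0,1}ⁿ with μ of full support. Then Δ_{χ²}(τ,μ) ≥ d_TV(τ,μ)² / (24·log(2n/d_TV(τ,μ))). -/

import Mathlib

set_option maxHeartbeats 2000000


/-- Symmetric chi-square divergence of `Ber p` and `Ber q`. -/
noncomputable def chiSq (p q : ℝ) : ℝ := (p - q) ^ 2 / ((p + q) * (2 - (p + q)))

/-- Total variation distance between finitely supported distributions. -/
noncomputable def tvDist {α : Type*} [Fintype α] (μ τ : α → ℝ) : ℝ :=
  (1 / 2) * ∑ x, |μ x - τ x|

/-- Probability under `ν` of the prefix event that the first `i` bits agree with `w`. -/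
noncomputable def preProb (n : ℕ) (ν : (Fin n → Bool) → ℝ) (i : Fin n) (w : Fin n → Bool) : ℝ :=
  ∑ x, if (∀ j, j < i → x j = w j) then ν x else 0

/-- Conditional probability that bit `i` equals `1`, given the prefix of `w` before `i`. -/
noncomputable def condP (n : ℕ) (ν : (Fin n → Bool) → ℝ) (i : Fin n) (w : Fin n → Bool) : ℝ :=
  (∑ x, if ((∀ j, j < i → x j = w j) ∧ x i = true) then ν x else 0) / preProb n ν i w

/-- Slice-wise chi-square divergence. -/
noncomputable def deltaChi (n : ℕ) (τ μ : (Fin n → Bool) → ℝ) : ℝ :=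
  ∑ i : Fin n, ∑ w, τ w * chiSq (condP n τ i w) (condP n μ i w)


namespace S8

noncomputable def pre (n : ℕ) (ν : (Fin n → Bool) → ℝ) (k : ℕ) (w : Fin n → Bool) : ℝ :=
  ∑ x, if (∀ j : Fin n, (j : ℕ) < k → x j = w j) then ν x else 0

def flipN (n : ℕ) (k : ℕ) (w : Fin n → Bool) : Fin n → Bool :=
  fun j => if (j : ℕ) = k then !(w j) else w j

section basic

variable {n : ℕ} {ν : (Fin n → Bool) → ℝ}

theorem pre_eq_preProb (i : Fin n) (w : Fin n → Bool) :
    preProb n ν i w = pre n ν (i : ℕ) w := rfl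

theorem pre_congr {k : ℕ} {w w' : Fin n → Bool}
    (h : ∀ j : Fin n, (j : ℕ) < k → w j = w' j) :
    pre n ν k w = pre n ν k w' := by
  unfold pre
  refine Finset.sum_congr rfl fun x _ => ?_
  congr 1
  simp only [eq_iff_iff]
  constructor
  · intro hx j hj; rw [hx j hj, h j hj]
  · intro hx j hj; rw [hx j hj, ← h j hj]

theorem pre_nonneg (h : ∀ x, 0 ≤ ν x) (k : ℕ) (w : Fin n → Bool) :
    0 ≤ pre n ν k w := by
  refine Finset.sum_nonneg fun x _ => ?_
  split <;> simp [h x]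

theorem pre_pos (h : ∀ x, 0 < ν x) (k : ℕ) (w : Fin n → Bool) :
    0 < pre n ν k w := by
  unfold pre
  refine Finset.sum_pos' (fun x _ => ?_) ⟨w, Finset.mem_univ w, ?_⟩
  · split
    · exact (h x).le
    · exact le_rfl
  · simp [h w]

theorem pre_zero (w : Fin n → Bool) : pre n ν 0 w = ∑ x, ν x := by
  unfold pre; simp

theorem pre_last {k : ℕ} (hk : n ≤ k) (w : Fin n → Bool) : pre n ν k w = ν w := by
  unfold pre
  have : ∀ x : Fin n → Bool, (∀ j : Fin n, (j : ℕ) < k → x j = w j) ↔ x = w := by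
    intro x
    constructor
    · intro h; funext j; exact h j (lt_of_lt_of_le j.isLt hk)
    · intro h j _; rw [h]
  simp only [this]
  simp [Finset.sum_ite_eq']

theorem flipN_invol (k : ℕ) (w : Fin n → Bool) : flipN n k (flipN n k w) = w := by
  funext j; unfold flipN; by_cases h : (j : ℕ) = k <;> simp [h]

theorem sum_flip {β : Type*} [AddCommMonoid β] (k : ℕ) (g : (Fin n → Bool) → β) :
    ∑ x, g (flipN n k x) = ∑ x, g x := by
  apply Finset.sum_nbij' (fun x => flipN n k x) (fun x => flipN n k x) <;>
    simp [flipN_invol]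

theorem flipN_agree {k : ℕ} {j : Fin n} (h : (j : ℕ) ≠ k) (w : Fin n → Bool) :
    flipN n k w j = w j := by simp [flipN, h]

theorem pre_flip_eq {k m : ℕ} (hm : m ≤ k) (w : Fin n → Bool) :
    pre n ν m (flipN n k w) = pre n ν m w := by
  refine pre_congr fun j hj => ?_
  exact flipN_agree (by omega) w

theorem pre_succ_add {k : ℕ} (hk : k < n) (w : Fin n → Bool) :
    pre n ν (k + 1) w + pre n ν (k + 1) (flipN n k w) = pre n ν k w := by
  unfold pre
  rw [← Finset.sum_add_distrib]
  refine Finset.sum_congr rfl fun x _ => ?_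
  set i : Fin n := ⟨k, hk⟩ with hi
  have hsplit : ∀ v : Fin n → Bool,
      (∀ j : Fin n, (j : ℕ) < k + 1 → x j = v j) ↔
      ((∀ j : Fin n, (j : ℕ) < k → x j = v j) ∧ x i = v i) := by
    intro v
    constructor
    · intro h
      refine ⟨fun j hj => h j (by omega), h i (by simp [hi])⟩
    · rintro ⟨h1, h2⟩ j hj
      rcases Nat.lt_succ_iff_lt_or_eq.mp hj with h | h
      · exact h1 j h
      · have : j = i := Fin.ext (by simp [hi, h])
        rw [this]; exact h2
  have hflip_pre : ∀ j : Fin n, (j : ℕ) < k → flipN n k w j = w j :=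
    fun j hj => flipN_agree (by omega) w
  have hflip_i : flipN n k w i = !(w i) := by simp [flipN, hi]
  by_cases hA : ∀ j : Fin n, (j : ℕ) < k → x j = w j
  · have e1 : (∀ j : Fin n, (j : ℕ) < k → x j = flipN n k w j) := by
      intro j hj; rw [hflip_pre j hj]; exact hA j hj
    by_cases hb : x i = w i
    · have c1 : (∀ j : Fin n, (j : ℕ) < k + 1 → x j = w j) := (hsplit w).mpr ⟨hA, hb⟩
      have c2 : ¬(∀ j : Fin n, (j : ℕ) < k + 1 → x j = flipN n k w j) := by
        rw [hsplit (flipN n k w), hflip_i]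
        rintro ⟨-, h2⟩
        rw [hb] at h2
        cases w i <;> simp at h2
      rw [if_pos c1, if_neg c2, if_pos hA]; ring
    · have c1 : ¬(∀ j : Fin n, (j : ℕ) < k + 1 → x j = w j) := by
        rw [hsplit w]; rintro ⟨-, h2⟩; exact hb h2
      have c2 : (∀ j : Fin n, (j : ℕ) < k + 1 → x j = flipN n k w j) := by
        rw [hsplit (flipN n k w), hflip_i]
        refine ⟨e1, ?_⟩
        cases hxw : x i <;> cases hwv : w i <;> simp_all
      rw [if_neg c1, if_pos c2, if_pos hA]; ring
  · have c1 : ¬(∀ j : Fin n, (j : ℕ) < k + 1 → x j = w j) := by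
      rw [hsplit w]; rintro ⟨h1, -⟩; exact hA h1
    have c2 : ¬(∀ j : Fin n, (j : ℕ) < k + 1 → x j = flipN n k w j) := by
      rw [hsplit (flipN n k w)]
      rintro ⟨h1, -⟩
      refine hA fun j hj => ?_
      rw [h1 j hj, hflip_pre j hj]
    rw [if_neg c1, if_neg c2, if_neg hA]; ring

/-- Grouping lemma. -/
theorem groupLem : ∀ m k : ℕ, k + m = n → ∀ F : (Fin n → Bool) → ℝ,
    (∀ x y : Fin n → Bool, (∀ j : Fin n, (j : ℕ) < k → x j = y j) → F x = F y) →
    ∑ x, ν x * F x = ((2 : ℝ) ^ m)⁻¹ * ∑ x, pre n ν k x * F x := by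
  intro m
  induction m with
  | zero =>
    intro k hk F _
    have : k = n := by omega
    subst this
    simp [pre_last le_rfl]
  | succ m ih =>
    intro k hk F hF
    have hkn : k < n := by omega
    have hF1 : ∀ x y : Fin n → Bool, (∀ j : Fin n, (j : ℕ) < k + 1 → x j = y j) → F x = F y :=
      fun x y h => hF x y fun j hj => h j (by omega)
    rw [ih (k + 1) (by omega) F hF1]
    have key : ∑ x, pre n ν (k + 1) x * F x
        = (2 : ℝ)⁻¹ * ∑ x, pre n ν k x * F x := by
      have hre : ∑ x, pre n ν (k + 1) (flipN n k x) * F x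
          = ∑ x, pre n ν (k + 1) x * F x := by
        have h2 := sum_flip (n := n) (β := ℝ) k (fun x => pre n ν (k + 1) (flipN n k x) * F x)
        simp only [flipN_invol] at h2
        rw [← h2]
        refine Finset.sum_congr rfl fun x _ => ?_
        congr 1
        exact hF _ _ fun j hj => flipN_agree (by omega) x
      have : (2 : ℝ) * ∑ x, pre n ν (k + 1) x * F x
          = ∑ x, pre n ν k x * F x := by
        rw [two_mul]
        nth_rewrite 2 [← hre]
        rw [← Finset.sum_add_distrib]
        refine Finset.sum_congr rfl fun x _ => ?_
        rw [← add_mul, pre_succ_add hkn]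
      rw [← this]; ring
    rw [key]
    ring

end basic


theorem sqrt2CS {a1 a2 b1 b2 : ℝ} (ha1 : 0 ≤ a1) (ha2 : 0 ≤ a2) (hb1 : 0 ≤ b1) (hb2 : 0 ≤ b2) :
    Real.sqrt (a1 * b1) + Real.sqrt (a2 * b2) ≤ Real.sqrt ((a1 + a2) * (b1 + b2)) := by
  rw [Real.sqrt_mul ha1, Real.sqrt_mul ha2]
  have hs : 0 ≤ Real.sqrt a1 * Real.sqrt b1 + Real.sqrt a2 * Real.sqrt b2 := by positivity
  rw [show (a1 + a2) * (b1 + b2)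
      = ((Real.sqrt a1)^2 + (Real.sqrt a2)^2) * ((Real.sqrt b1)^2 + (Real.sqrt b2)^2) by
    rw [Real.sq_sqrt ha1, Real.sq_sqrt ha2, Real.sq_sqrt hb1, Real.sq_sqrt hb2]]
  rw [Real.le_sqrt hs]
  · nlinarith [sq_nonneg (Real.sqrt a1 * Real.sqrt b2 - Real.sqrt a2 * Real.sqrt b1)]
  · positivity

theorem chiSq_nonneg {p q : ℝ} (hp0 : 0 ≤ p) (hp1 : p ≤ 1) (hq0 : 0 ≤ q) (hq1 : q ≤ 1) :
    0 ≤ chiSq p q := by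
  unfold chiSq
  apply div_nonneg (sq_nonneg _)
  nlinarith

theorem chiSq_one_sub (p q : ℝ) : chiSq (1 - p) (1 - q) = chiSq p q := by
  unfold chiSq
  ring_nf

theorem hell_le_chiSq {p q : ℝ} (hp0 : 0 ≤ p) (hp1 : p ≤ 1) (hq0 : 0 < q) (hq1 : q < 1) :
    1 - Real.sqrt (p * q) - Real.sqrt ((1 - p) * (1 - q)) ≤ chiSq p q := by
  have hpq : 0 < p + q := by nlinarith
  have hpq2 : 0 < 2 - (p + q) := by nlinarith
  have h1p : (0:ℝ) ≤ 1 - p := by linarith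
  have h1q : (0:ℝ) ≤ 1 - q := by linarith
  have sp := Real.sq_sqrt hp0
  have sq_ := Real.sq_sqrt hq0.le
  have sp1 := Real.sq_sqrt h1p
  have sq1 := Real.sq_sqrt h1q
  have np := Real.sqrt_nonneg p
  have nq := Real.sqrt_nonneg q
  have np1 := Real.sqrt_nonneg (1 - p)
  have nq1 := Real.sqrt_nonneg (1 - q)
  have dm : (Real.sqrt p - Real.sqrt q) * (Real.sqrt p + Real.sqrt q) = p - q := by
    linear_combination sp - sq_
  have dm1 : (Real.sqrt (1-p) - Real.sqrt (1-q)) * (Real.sqrt (1-p) + Real.sqrt (1-q))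
      = q - p := by linear_combination sp1 - sq1
  have A : (Real.sqrt p - Real.sqrt q)^2 * (p + q) ≤ (p - q)^2 := by
    have key : p + q ≤ (Real.sqrt p + Real.sqrt q)^2 := by nlinarith [mul_nonneg np nq]
    calc (Real.sqrt p - Real.sqrt q)^2 * (p + q)
        ≤ (Real.sqrt p - Real.sqrt q)^2 * (Real.sqrt p + Real.sqrt q)^2 :=
          mul_le_mul_of_nonneg_left key (sq_nonneg _)
      _ = (p - q)^2 := by rw [← mul_pow, dm]
  have B : (Real.sqrt (1-p) - Real.sqrt (1-q))^2 * (2 - (p + q)) ≤ (p - q)^2 := by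
    have key : 2 - (p + q) ≤ (Real.sqrt (1-p) + Real.sqrt (1-q))^2 := by
      nlinarith [mul_nonneg np1 nq1]
    calc (Real.sqrt (1-p) - Real.sqrt (1-q))^2 * (2 - (p + q))
        ≤ (Real.sqrt (1-p) - Real.sqrt (1-q))^2 * (Real.sqrt (1-p) + Real.sqrt (1-q))^2 :=
          mul_le_mul_of_nonneg_left key (sq_nonneg _)
      _ = (p - q)^2 := by rw [← mul_pow, dm1]; ring
  have delta_eq : 1 - Real.sqrt (p * q) - Real.sqrt ((1 - p) * (1 - q))
      = ((Real.sqrt p - Real.sqrt q)^2 + (Real.sqrt (1-p) - Real.sqrt (1-q))^2) / 2 := by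
    rw [Real.sqrt_mul hp0, Real.sqrt_mul h1p]
    linear_combination (- sp - sq_ - sp1 - sq1) / 2
  rw [delta_eq]
  unfold chiSq
  rw [div_le_div_iff₀ (by norm_num) (by positivity)]
  nlinarith [mul_le_mul_of_nonneg_right A hpq2.le, mul_le_mul_of_nonneg_right B hpq.le,
    sq_nonneg (Real.sqrt p - Real.sqrt q), sq_nonneg (Real.sqrt (1-p) - Real.sqrt (1-q))]


end S8
namespace S8
section node
variable {n : ℕ} {ν τ μ : (Fin n → Bool) → ℝ}

noncomputable def numP (n : ℕ) (ν : (Fin n → Bool) → ℝ) (i : Fin n) (w : Fin n → Bool) : ℝ :=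
  ∑ x, if ((∀ j, j < i → x j = w j) ∧ x i = true) then ν x else 0

theorem condP_eq (i : Fin n) (w : Fin n → Bool) :
    condP n ν i w = numP n ν i w / pre n ν (i : ℕ) w := rfl

theorem succ_cond_iff (i : Fin n) (x w : Fin n → Bool) :
    (∀ j : Fin n, (j : ℕ) < (i : ℕ) + 1 → x j = w j) ↔
    ((∀ j : Fin n, (j : ℕ) < (i : ℕ) → x j = w j) ∧ x i = w i) := by
  constructor
  · intro h
    exact ⟨fun j hj => h j (by omega), h i (by omega)⟩
  · rintro ⟨h1, h2⟩ j hj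
    rcases Nat.lt_succ_iff_lt_or_eq.mp hj with h | h
    · exact h1 j h
    · have : j = i := Fin.ext (by simp [h])
      rw [this]; exact h2

theorem numP_nonneg (hν : ∀ x, 0 ≤ ν x) (i : Fin n) (w : Fin n → Bool) :
    0 ≤ numP n ν i w := by
  refine Finset.sum_nonneg fun x _ => ?_
  split
  · exact hν x
  · exact le_rfl

theorem numP_congr {i : Fin n} {w w' : Fin n → Bool}
    (h : ∀ j : Fin n, (j : ℕ) < (i : ℕ) → w j = w' j) :
    numP n ν i w = numP n ν i w' := by
  unfold numP
  refine Finset.sum_congr rfl fun x _ => ?_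
  congr 1
  simp only [eq_iff_iff]
  constructor
  · rintro ⟨h1, h2⟩
    exact ⟨fun j hj => (h1 j hj).trans (h j hj), h2⟩
  · rintro ⟨h1, h2⟩
    exact ⟨fun j hj => (h1 j hj).trans (h j hj).symm, h2⟩

theorem numP_le_pre (hν : ∀ x, 0 ≤ ν x) (i : Fin n) (w : Fin n → Bool) :
    numP n ν i w ≤ pre n ν (i : ℕ) w := by
  refine Finset.sum_le_sum fun x _ => ?_
  by_cases h1 : (∀ j : Fin n, (j : ℕ) < (i : ℕ) → x j = w j)
  · by_cases h2 : x i = true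
    · rw [if_pos ⟨h1, h2⟩, if_pos h1]
    · rw [if_neg (by tauto), if_pos h1]; exact hν x
  · rw [if_neg (by tauto), if_neg h1]

theorem numP_pos (hν : ∀ x, 0 < ν x) (i : Fin n) (w : Fin n → Bool) :
    0 < numP n ν i w := by
  unfold numP
  refine Finset.sum_pos' (fun x _ => ?_) ⟨Function.update w i true, Finset.mem_univ _, ?_⟩
  · split
    · exact (hν x).le
    · exact le_rfl
  · have hc : (∀ j : Fin n, j < i → Function.update w i true j = w j) ∧
        Function.update w i true i = true := by
      refine ⟨fun j hj => ?_, by simp⟩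
      rw [Function.update_of_ne (by exact fun he => absurd he (by intro he; subst he; exact lt_irrefl _ hj)) _ _]
    rw [if_pos hc]
    exact hν _

theorem pre_sub_numP_pos (hν : ∀ x, 0 < ν x) (i : Fin n) (w : Fin n → Bool) :
    numP n ν i w < pre n ν (i : ℕ) w := by
  have key : pre n ν (i : ℕ) w - numP n ν i w
      = ∑ x, if ((∀ j : Fin n, (j : ℕ) < (i : ℕ) → x j = w j) ∧ x i = false) then ν x else 0 := by
    unfold pre numP
    rw [← Finset.sum_sub_distrib]
    refine Finset.sum_congr rfl fun x _ => ?_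
    by_cases h1 : (∀ j : Fin n, (j : ℕ) < (i : ℕ) → x j = w j)
    · by_cases h2 : x i = true
      · rw [if_pos h1, if_pos ⟨h1, h2⟩, if_neg (by simp [h2])]; ring
      · have h2' : x i = false := by simpa using h2
        rw [if_pos h1, if_neg (by tauto), if_pos ⟨h1, h2'⟩]; ring
    · rw [if_neg h1, if_neg (by tauto), if_neg (by tauto)]; ring
  have pos : 0 < pre n ν (i : ℕ) w - numP n ν i w := by
    rw [key]
    refine Finset.sum_pos' (fun x _ => ?_) ⟨Function.update w i false, Finset.mem_univ _, ?_⟩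
    · split
      · exact (hν x).le
      · exact le_rfl
    · have hc : (∀ j : Fin n, (j : ℕ) < (i : ℕ) → Function.update w i false j = w j) ∧
          Function.update w i false i = false := by
        refine ⟨fun j hj => ?_, by simp⟩
        rw [Function.update_of_ne (fun he => by subst he; exact lt_irrefl _ hj) _ _]
      rw [if_pos hc]
      exact hν _
  linarith

theorem condP_nonneg (hν : ∀ x, 0 ≤ ν x) (i : Fin n) (w : Fin n → Bool) :
    0 ≤ condP n ν i w :=
  div_nonneg (numP_nonneg hν i w) (pre_nonneg hν _ w)

theorem condP_le_one (hν : ∀ x, 0 ≤ ν x) (i : Fin n) (w : Fin n → Bool) :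
    condP n ν i w ≤ 1 := by
  rw [condP_eq]
  rcases eq_or_lt_of_le (pre_nonneg hν (i : ℕ) w) with h | h
  · have hnum : numP n ν i w = 0 :=
      le_antisymm ((numP_le_pre hν i w).trans_eq h.symm) (numP_nonneg hν i w)
    simp [hnum]
  · exact div_le_one_of_le₀ (numP_le_pre hν i w) (le_of_lt h)

theorem pre_succ_true {i : Fin n} {w : Fin n → Bool} (hw : w i = true) :
    pre n ν ((i : ℕ) + 1) w = numP n ν i w := by
  unfold pre numP
  refine Finset.sum_congr rfl fun x _ => ?_
  congr 1
  rw [eq_iff_iff, succ_cond_iff i x w, hw]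
  exact Iff.rfl

theorem pre_succ_false {i : Fin n} {w : Fin n → Bool} (hw : w i = false) :
    pre n ν ((i : ℕ) + 1) w = pre n ν (i : ℕ) w - numP n ν i w := by
  have key : pre n ν (i : ℕ) w - numP n ν i w
      = ∑ x, if ((∀ j : Fin n, (j : ℕ) < (i : ℕ) → x j = w j) ∧ x i = false) then ν x else 0 := by
    unfold pre numP
    rw [← Finset.sum_sub_distrib]
    refine Finset.sum_congr rfl fun x _ => ?_
    by_cases h1 : (∀ j : Fin n, (j : ℕ) < (i : ℕ) → x j = w j)
    · by_cases h2 : x i = true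
      · rw [if_pos h1, if_pos ⟨h1, h2⟩, if_neg (by simp [h2])]; ring
      · have h2' : x i = false := by simpa using h2
        rw [if_pos h1, if_neg (by tauto), if_pos ⟨h1, h2'⟩]; ring
    · rw [if_neg h1, if_neg (by tauto), if_neg (by tauto)]; ring
  rw [key]
  unfold pre
  refine Finset.sum_congr rfl fun x _ => ?_
  congr 1
  rw [eq_iff_iff, succ_cond_iff i x w, hw]

theorem node_core {aτ aμ p q : ℝ} (haτ : 0 < aτ) (haμ : 0 < aμ) (hfree : aμ < 64 * aτ)
    (hp0 : 0 ≤ p) (hp1 : p ≤ 1) (hq0 : 0 < q) (hq1 : q < 1) :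
    Real.sqrt (aτ * aμ) - Real.sqrt ((p * aτ) * (q * aμ))
      - Real.sqrt (((1 - p) * aτ) * ((1 - q) * aμ)) ≤ 8 * aτ * chiSq p q := by
  have e1 : (p * aτ) * (q * aμ) = (p * q) * (aτ * aμ) := by ring
  have e2 : ((1 - p) * aτ) * ((1 - q) * aμ) = ((1 - p) * (1 - q)) * (aτ * aμ) := by ring
  rw [e1, e2, Real.sqrt_mul (show (0:ℝ) ≤ p * q by positivity) (aτ * aμ),
    Real.sqrt_mul (show (0:ℝ) ≤ (1 - p) * (1 - q) by nlinarith) (aτ * aμ)]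
  have hδ := hell_le_chiSq hp0 hp1 hq0 hq1
  have hsa : Real.sqrt (aτ * aμ) ≤ 8 * aτ := by
    have h2 : aτ * aμ ≤ (8 * aτ) ^ 2 := by nlinarith
    calc Real.sqrt (aτ * aμ) ≤ Real.sqrt ((8 * aτ) ^ 2) := Real.sqrt_le_sqrt h2
      _ = 8 * aτ := Real.sqrt_sq (by positivity)
  have hfact : Real.sqrt (aτ * aμ) - Real.sqrt (p * q) * Real.sqrt (aτ * aμ)
      - Real.sqrt ((1 - p) * (1 - q)) * Real.sqrt (aτ * aμ)
      = Real.sqrt (aτ * aμ) * (1 - Real.sqrt (p * q) - Real.sqrt ((1 - p) * (1 - q))) := by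
    ring
  rw [hfact]
  calc Real.sqrt (aτ * aμ) * (1 - Real.sqrt (p * q) - Real.sqrt ((1 - p) * (1 - q)))
      ≤ Real.sqrt (aτ * aμ) * chiSq p q :=
        mul_le_mul_of_nonneg_left hδ (Real.sqrt_nonneg _)
    _ ≤ 8 * aτ * chiSq p q :=
        mul_le_mul_of_nonneg_right hsa (chiSq_nonneg hp0 hp1 hq0.le hq1.le)

end node
end S8
namespace S8
section sig
variable {n : ℕ} {τ μ : (Fin n → Bool) → ℝ}

def sigP (n : ℕ) (τ μ : (Fin n → Bool) → ℝ) (x : Fin n → Bool) (k : ℕ) : Prop :=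
  (64 * pre n τ k x ≤ pre n μ k x ∧ k ≤ n) ∨ k = n + 1

theorem sigP_ex (n : ℕ) (τ μ : (Fin n → Bool) → ℝ) (x : Fin n → Bool) :
    ∃ k, sigP n τ μ x k := ⟨n + 1, Or.inr rfl⟩

noncomputable def sig (n : ℕ) (τ μ : (Fin n → Bool) → ℝ) (x : Fin n → Bool) : ℕ :=
  @Nat.find (sigP n τ μ x) (Classical.decPred _) (sigP_ex n τ μ x)

theorem sig_spec (x : Fin n → Bool) : sigP n τ μ x (sig n τ μ x) :=
  @Nat.find_spec (sigP n τ μ x) (Classical.decPred _) (sigP_ex n τ μ x)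

theorem sig_stop {x : Fin n → Bool} (h : sig n τ μ x ≤ n) :
    64 * pre n τ (sig n τ μ x) x ≤ pre n μ (sig n τ μ x) x := by
  rcases sig_spec (τ := τ) (μ := μ) x with ⟨h1, -⟩ | h2
  · exact h1
  · omega

theorem lt_sig_iff {x : Fin n → Bool} {k : ℕ} :
    k < sig n τ μ x ↔ ∀ m ≤ k, ¬ sigP n τ μ x m :=
  @Nat.lt_find_iff (sigP n τ μ x) (Classical.decPred _) (sigP_ex n τ μ x) k

theorem sig_eq_iff {x : Fin n → Bool} {m : ℕ} :
    sig n τ μ x = m ↔ sigP n τ μ x m ∧ ∀ j < m, ¬ sigP n τ μ x j :=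
  @Nat.find_eq_iff m (sigP n τ μ x) (Classical.decPred _) (sigP_ex n τ μ x)

theorem sig_free {x : Fin n → Bool} {k : ℕ} (h : k < sig n τ μ x) (hk : k ≤ n) :
    pre n μ k x < 64 * pre n τ k x := by
  have h2 := lt_sig_iff.mp h k le_rfl
  by_contra hc
  push_neg at hc
  exact h2 (Or.inl ⟨hc, hk⟩)

theorem sigP_congr {x y : Fin n → Bool} {k m : ℕ} (hm : m ≤ k)
    (h : ∀ j : Fin n, (j : ℕ) < k → x j = y j) :
    sigP n τ μ x m ↔ sigP n τ μ y m := by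
  unfold sigP
  rw [pre_congr (ν := τ) fun j hj => h j (by omega),
      pre_congr (ν := μ) fun j hj => h j (by omega)]

theorem lt_sig_congr {x y : Fin n → Bool} {k : ℕ}
    (h : ∀ j : Fin n, (j : ℕ) < k → x j = y j) :
    (k < sig n τ μ x ↔ k < sig n τ μ y) := by
  rw [lt_sig_iff, lt_sig_iff]
  constructor
  · intro hx m hm
    rw [← sigP_congr hm h]
    exact hx m hm
  · intro hy m hm
    rw [sigP_congr hm h]
    exact hy m hm

theorem sig_eq_congr {x y : Fin n → Bool} {k m : ℕ} (hm : m ≤ k)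
    (h : ∀ j : Fin n, (j : ℕ) < k → x j = y j) :
    (sig n τ μ x = m ↔ sig n τ μ y = m) := by
  rw [sig_eq_iff, sig_eq_iff]
  constructor
  · rintro ⟨h1, h2⟩
    refine ⟨(sigP_congr hm h).mp h1, fun j hj => ?_⟩
    rw [← sigP_congr (by omega) h]
    exact h2 j hj
  · rintro ⟨h1, h2⟩
    refine ⟨(sigP_congr hm h).mpr h1, fun j hj => ?_⟩
    rw [sigP_congr (by omega) h]
    exact h2 j hj

end sig

theorem sum_sqrt_mul_le {α : Type*} (s : Finset α) (f g : α → ℝ)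
    (hf : ∀ a ∈ s, 0 ≤ f a) (hg : ∀ a ∈ s, 0 ≤ g a) :
    ∑ a ∈ s, Real.sqrt (f a * g a) ≤ Real.sqrt ((∑ a ∈ s, f a) * (∑ a ∈ s, g a)) := by
  have h1 : ∀ a ∈ s, Real.sqrt (f a * g a) = Real.sqrt (f a) * Real.sqrt (g a) :=
    fun a ha => Real.sqrt_mul (hf a ha) _
  rw [Finset.sum_congr rfl h1]
  have hcs := Finset.sum_mul_sq_le_sq_mul_sq s (fun a => Real.sqrt (f a)) (fun a => Real.sqrt (g a))
  have e1 : ∑ a ∈ s, Real.sqrt (f a) ^ 2 = ∑ a ∈ s, f a :=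
    Finset.sum_congr rfl fun a ha => Real.sq_sqrt (hf a ha)
  have e2 : ∑ a ∈ s, Real.sqrt (g a) ^ 2 = ∑ a ∈ s, g a :=
    Finset.sum_congr rfl fun a ha => Real.sq_sqrt (hg a ha)
  rw [e1, e2] at hcs
  have hnn : 0 ≤ ∑ a ∈ s, Real.sqrt (f a) * Real.sqrt (g a) :=
    Finset.sum_nonneg fun a _ => mul_nonneg (Real.sqrt_nonneg _) (Real.sqrt_nonneg _)
  calc ∑ a ∈ s, Real.sqrt (f a) * Real.sqrt (g a)
      = Real.sqrt ((∑ a ∈ s, Real.sqrt (f a) * Real.sqrt (g a)) ^ 2) := (Real.sqrt_sq hnn).symm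
    _ ≤ Real.sqrt ((∑ a ∈ s, f a) * (∑ a ∈ s, g a)) := Real.sqrt_le_sqrt hcs

end S8
namespace S8
section tele
variable {n : ℕ} {τ μ : (Fin n → Bool) → ℝ}

noncomputable def afn (n : ℕ) (τ μ : (Fin n → Bool) → ℝ) (k : ℕ) (w : Fin n → Bool) : ℝ :=
  Real.sqrt (pre n τ k w * pre n μ k w)

noncomputable def DkN (n : ℕ) (τ μ : (Fin n → Bool) → ℝ) (k : ℕ) (w : Fin n → Bool) : ℝ :=
  afn n τ μ k w - afn n τ μ (k+1) w - afn n τ μ (k+1) (flipN n k w)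

noncomputable def fD (n : ℕ) (τ μ : (Fin n → Bool) → ℝ) (j : ℕ) : ℝ :=
  ((2:ℝ)^(n-j))⁻¹ * ∑ x, (if j < sig n τ μ x then DkN n τ μ j x else 0)

noncomputable def stA (n : ℕ) (τ μ : (Fin n → Bool) → ℝ) (j : ℕ) : ℝ :=
  ((2:ℝ)^(n-j))⁻¹ * ∑ x, (if sig n τ μ x = j then afn n τ μ j x else 0)

noncomputable def tl (n : ℕ) (τ μ : (Fin n → Bool) → ℝ) (k : ℕ) : ℝ :=
  ((2:ℝ)^(n-k))⁻¹ * ∑ x, (if k < sig n τ μ x then afn n τ μ k x else 0)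

theorem DkN_le (hτ0 : ∀ x, 0 ≤ τ x) (hμ0 : ∀ x, 0 < μ x)
    {k : ℕ} (hk : k < n) (w : Fin n → Bool)
    (hfree : pre n μ k w < 64 * pre n τ k w) :
    DkN n τ μ k w ≤ 8 * pre n τ k w * chiSq (condP n τ ⟨k, hk⟩ w) (condP n μ ⟨k, hk⟩ w) := by
  set i : Fin n := ⟨k, hk⟩ with hidef
  have hμ0' : ∀ x, 0 ≤ μ x := fun x => (hμ0 x).le
  have haμ : 0 < pre n μ k w := pre_pos hμ0 k w
  have haτ : 0 < pre n τ k w := by nlinarith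
  have hik : (i : ℕ) = k := rfl
  set p := condP n τ i w with hp
  set q := condP n μ i w with hq
  have hp0 : 0 ≤ p := condP_nonneg hτ0 i w
  have hp1 : p ≤ 1 := condP_le_one hτ0 i w
  have hq0 : 0 < q := by
    rw [hq, condP_eq]
    exact div_pos (numP_pos hμ0 i w) haμ
  have hq1 : q < 1 := by
    rw [hq, condP_eq]
    exact (div_lt_one haμ).mpr (pre_sub_numP_pos hμ0 i w)
  have hnumτ : numP n τ i w = p * pre n τ k w := by
    rw [hp, condP_eq, hik, div_mul_cancel₀ _ haτ.ne']
  have hnumμ : numP n μ i w = q * pre n μ k w := by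
    rw [hq, condP_eq, hik, div_mul_cancel₀ _ haμ.ne']
  have hflip_pref : ∀ j : Fin n, (j : ℕ) < k → flipN n k w j = w j :=
    fun j hj => flipN_agree (by omega) w
  have hflip_i : flipN n k w i = !(w i) := by simp [flipN, hik]
  have hfpreτ : pre n τ k (flipN n k w) = pre n τ k w := pre_flip_eq le_rfl w
  have hfpreμ : pre n μ k (flipN n k w) = pre n μ k w := pre_flip_eq le_rfl w
  have hfnumτ : numP n τ i (flipN n k w) = numP n τ i w := numP_congr hflip_pref
  have hfnumμ : numP n μ i (flipN n k w) = numP n μ i w := numP_congr hflip_pref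
  have hcore := node_core haτ haμ hfree hp0 hp1 hq0 hq1
  cases hw : w i with
  | true =>
    have hwf : flipN n k w i = false := by rw [hflip_i, hw]; rfl
    have e1 : pre n τ (k+1) w = p * pre n τ k w := by
      rw [show k + 1 = (i:ℕ) + 1 from rfl, pre_succ_true hw, hnumτ]
    have e2 : pre n μ (k+1) w = q * pre n μ k w := by
      rw [show k + 1 = (i:ℕ) + 1 from rfl, pre_succ_true hw, hnumμ]
    have e3 : pre n τ (k+1) (flipN n k w) = (1-p) * pre n τ k w := by
      rw [show k + 1 = (i:ℕ) + 1 from rfl, pre_succ_false hwf, hik, hfpreτ, hfnumτ, hnumτ]; ring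
    have e4 : pre n μ (k+1) (flipN n k w) = (1-q) * pre n μ k w := by
      rw [show k + 1 = (i:ℕ) + 1 from rfl, pre_succ_false hwf, hik, hfpreμ, hfnumμ, hnumμ]; ring
    unfold DkN afn
    rw [e1, e2, e3, e4]
    exact hcore
  | false =>
    have hwf : flipN n k w i = true := by rw [hflip_i, hw]; rfl
    have e1 : pre n τ (k+1) w = (1-p) * pre n τ k w := by
      rw [show k + 1 = (i:ℕ) + 1 from rfl, pre_succ_false hw, hik, hnumτ]; ring
    have e2 : pre n μ (k+1) w = (1-q) * pre n μ k w := by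
      rw [show k + 1 = (i:ℕ) + 1 from rfl, pre_succ_false hw, hik, hnumμ]; ring
    have e3 : pre n τ (k+1) (flipN n k w) = p * pre n τ k w := by
      rw [show k + 1 = (i:ℕ) + 1 from rfl, pre_succ_true hwf, hfnumτ, hnumτ]
    have e4 : pre n μ (k+1) (flipN n k w) = q * pre n μ k w := by
      rw [show k + 1 = (i:ℕ) + 1 from rfl, pre_succ_true hwf, hfnumμ, hnumμ]
    unfold DkN afn
    rw [e1, e2, e3, e4]
    linarith

theorem GT (hτ1 : ∑ x, τ x = 1) (hμ1 : ∑ x, μ x = 1) :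
    ∀ k, k ≤ n → (1:ℝ) = (∑ j ∈ Finset.range k, fD n τ μ j)
      + (∑ j ∈ Finset.range (k+1), stA n τ μ j) + tl n τ μ k := by
  have hcard : ∑ _x : Fin n → Bool, (1:ℝ) = 2^n := by
    simp
  intro k
  induction k with
  | zero =>
    intro _
    simp only [Finset.range_zero, Finset.sum_empty, zero_add, Finset.range_one,
      Finset.sum_singleton]
    unfold stA tl
    rw [← mul_add, ← Finset.sum_add_distrib]
    have hone : ∀ x : Fin n → Bool, ((if sig n τ μ x = 0 then afn n τ μ 0 x else 0)
        + if 0 < sig n τ μ x then afn n τ μ 0 x else 0) = 1 := by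
      intro x
      have haf : afn n τ μ 0 x = 1 := by
        unfold afn
        rw [pre_zero, pre_zero, hτ1, hμ1]
        simp
      rcases Nat.eq_zero_or_pos (sig n τ μ x) with h | h
      · rw [if_pos h, if_neg (by omega), haf]; ring
      · rw [if_neg (by omega), if_pos h, haf]; ring
    rw [Finset.sum_congr rfl fun x _ => hone x, hcard]
    simp
  | succ k ih =>
    intro hk1
    have hk : k < n := by omega
    have IH := ih (by omega)
    have hre2' : ∑ x, (if k < sig n τ μ x then afn n τ μ (k+1) (flipN n k x) else 0)
        = ∑ x, (if k < sig n τ μ x then afn n τ μ (k+1) x else 0) := by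
      have hre := sum_flip (n := n) (β := ℝ) k
        (fun x => if k < sig n τ μ x then afn n τ μ (k+1) x else 0)
      rw [← hre]
      refine Finset.sum_congr rfl fun x _ => ?_
      have hagree : ∀ j : Fin n, (j : ℕ) < k → flipN n k x j = x j :=
        fun j hj => flipN_agree (by omega) x
      have hiff : (k < sig n τ μ (flipN n k x)) = (k < sig n τ μ x) :=
        propext (lt_sig_congr hagree)
      simp only [hiff]
    have key2 : (2:ℝ) * (∑ x, (if k < sig n τ μ x then afn n τ μ (k+1) x else 0))
        = ∑ x, (if k < sig n τ μ x then (afn n τ μ k x - DkN n τ μ k x) else 0) := by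
      rw [two_mul]
      nth_rewrite 2 [← hre2']
      rw [← Finset.sum_add_distrib]
      refine Finset.sum_congr rfl fun x _ => ?_
      by_cases hs : k < sig n τ μ x
      · rw [if_pos hs, if_pos hs, if_pos hs]
        unfold DkN; ring
      · rw [if_neg hs, if_neg hs, if_neg hs]; ring
    have hsplit : ∑ x, (if k < sig n τ μ x then afn n τ μ (k+1) x else 0)
        = (∑ x, (if sig n τ μ x = k+1 then afn n τ μ (k+1) x else 0))
          + ∑ x, (if k+1 < sig n τ μ x then afn n τ μ (k+1) x else 0) := by
      rw [← Finset.sum_add_distrib]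
      refine Finset.sum_congr rfl fun x _ => ?_
      by_cases h1 : sig n τ μ x = k+1
      · rw [if_pos (by omega), if_pos h1, if_neg (by omega)]; ring
      · by_cases h2 : k+1 < sig n τ μ x
        · rw [if_pos (by omega), if_neg h1, if_pos h2]; ring
        · rw [if_neg (by omega), if_neg h1, if_neg h2]; ring
    have e00 : ∑ x, (if k < sig n τ μ x then afn n τ μ k x else 0)
        = (∑ x, (if k < sig n τ μ x then DkN n τ μ k x else 0))
          + ∑ x, (if k < sig n τ μ x then (afn n τ μ k x - DkN n τ μ k x) else 0) := by
      rw [← Finset.sum_add_distrib]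
      refine Finset.sum_congr rfl fun x _ => ?_
      by_cases hs : k < sig n τ μ x
      · rw [if_pos hs, if_pos hs, if_pos hs]; ring
      · rw [if_neg hs, if_neg hs, if_neg hs]; ring
    have hpow : ((2:ℝ)^(n-k))⁻¹ * 2 = ((2:ℝ)^(n-(k+1)))⁻¹ := by
      have hnk : n - k = (n - (k+1)) + 1 := by omega
      rw [hnk, pow_succ]
      have h0 : ((2:ℝ)^(n-(k+1))) ≠ 0 := by positivity
      field_simp
    have expand : tl n τ μ k = fD n τ μ k + stA n τ μ (k+1) + tl n τ μ (k+1) := by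
      unfold tl fD stA
      rw [e00, ← key2, hsplit, ← hpow]
      ring
    rw [Finset.sum_range_succ, Finset.sum_range_succ (f := fun j => stA n τ μ j) (n := k+1)]
    linarith [IH, expand]

end tele
end S8
namespace S8
section final
variable {n : ℕ} {τ μ : (Fin n → Bool) → ℝ}

theorem condP_congr {ν : (Fin n → Bool) → ℝ} {i : Fin n} {w w' : Fin n → Bool}
    (h : ∀ j : Fin n, (j : ℕ) < (i : ℕ) → w j = w' j) :
    condP n ν i w = condP n ν i w' := by
  rw [condP_eq, condP_eq, numP_congr h, pre_congr h]

theorem ind_split (ν : (Fin n → Bool) → ℝ) :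
    ∑ x, (if sig n τ μ x ≤ n then ν x else 0)
      = ∑ j ∈ Finset.range (n+1), ((2:ℝ)^(n-j))⁻¹
          * ∑ x, (if sig n τ μ x = j then pre n ν j x else 0) := by
  have step1 : ∀ x : Fin n → Bool, (if sig n τ μ x ≤ n then ν x else 0)
      = ∑ j ∈ Finset.range (n+1), (if sig n τ μ x = j then ν x else 0) := by
    intro x
    rw [Finset.sum_ite_eq (Finset.range (n+1)) (sig n τ μ x) (fun _ => ν x)]
    congr 1
    simp [Nat.lt_succ_iff]
  rw [Finset.sum_congr rfl fun x _ => step1 x, Finset.sum_comm]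
  refine Finset.sum_congr rfl fun j hj => ?_
  have hjn : j ≤ n := by simp [Nat.lt_succ_iff] at hj; exact hj
  have hmeas : ∀ x y : Fin n → Bool, (∀ i : Fin n, (i : ℕ) < j → x i = y i) →
      ((if sig n τ μ x = j then (1:ℝ) else 0) = if sig n τ μ y = j then (1:ℝ) else 0) := by
    intro x y hxy
    have := sig_eq_congr (τ := τ) (μ := μ) (m := j) le_rfl hxy
    by_cases hs : sig n τ μ x = j
    · rw [if_pos hs, if_pos (this.mp hs)]
    · rw [if_neg hs, if_neg (fun hc => hs (this.mpr hc))]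
  have hgl := groupLem (ν := ν) (n - j) j (by omega)
      (fun x => if sig n τ μ x = j then (1:ℝ) else 0) hmeas
  have e1 : ∀ x : Fin n → Bool, ν x * (if sig n τ μ x = j then (1:ℝ) else 0)
      = (if sig n τ μ x = j then ν x else 0) := by
    intro x; by_cases hs : sig n τ μ x = j <;> simp [hs]
  have e2 : ∀ x : Fin n → Bool, pre n ν j x * (if sig n τ μ x = j then (1:ℝ) else 0)
      = (if sig n τ μ x = j then pre n ν j x else 0) := by
    intro x; by_cases hs : sig n τ μ x = j <;> simp [hs]
  rw [Finset.sum_congr rfl fun x _ => (e1 x).symm, hgl,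
    Finset.sum_congr rfl fun x _ => e2 x]

theorem main_chain (hμ0 : ∀ x, 0 < μ x) (hμ1 : ∑ x, μ x = 1)
    (hτ0 : ∀ x, 0 ≤ τ x) (hτ1 : ∑ x, τ x = 1) :
    (tvDist τ μ)^2 ≤ 24 * deltaChi n τ μ := by
  classical
  have hμ0' : ∀ x, 0 ≤ μ x := fun x => (hμ0 x).le
  set F := ∑ x, Real.sqrt (τ x * μ x) with hF
  set tA := ∑ x, (if sig n τ μ x ≤ n then τ x else 0) with htA
  set MA := ∑ x, (if sig n τ μ x ≤ n then μ x else 0) with hMA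
  set Fst := ∑ x, (if sig n τ μ x ≤ n then Real.sqrt (τ x * μ x) else 0) with hFst
  set Ffr := ∑ x, (if ¬ (sig n τ μ x ≤ n) then Real.sqrt (τ x * μ x) else 0) with hFfr
  have hGT := GT (τ := τ) (μ := μ) hτ1 hμ1 n le_rfl
  -- tail at n equals Ffr
  have htl : tl n τ μ n = Ffr := by
    unfold tl
    rw [Nat.sub_self, pow_zero, inv_one, one_mul]
    refine Finset.sum_congr rfl fun x _ => ?_
    have e : afn n τ μ n x = Real.sqrt (τ x * μ x) := by
      unfold afn; rw [pre_last le_rfl, pre_last le_rfl]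
    rw [e]
    congr 1
    rw [eq_iff_iff]
    omega
  have hFsplit : F = Fst + Ffr := by
    rw [hF, hFst, hFfr, ← Finset.sum_add_distrib]
    refine Finset.sum_congr rfl fun x _ => ?_
    by_cases hs : sig n τ μ x ≤ n
    · rw [if_pos hs, if_neg (by tauto)]; ring
    · rw [if_neg hs, if_pos hs]; ring
  -- nonnegativity of various sums
  have htA0 : 0 ≤ tA := Finset.sum_nonneg fun x _ => by split <;> simp [hτ0 x]
  have hMA0 : 0 ≤ MA := Finset.sum_nonneg fun x _ => by split <;> simp [hμ0' x]
  have hFst0 : 0 ≤ Fst := Finset.sum_nonneg fun x _ => by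
    split <;> simp [Real.sqrt_nonneg]
  have hMA1 : MA ≤ 1 := by
    rw [hMA, ← hμ1]
    refine Finset.sum_le_sum fun x _ => ?_
    split <;> simp [hμ0' x]
  have htA1 : tA ≤ 1 := by
    rw [htA, ← hτ1]
    refine Finset.sum_le_sum fun x _ => ?_
    split <;> simp [hτ0 x]
  -- 64 tA ≤ MA
  have h64 : 64 * tA ≤ MA := by
    rw [htA, hMA, ind_split τ, ind_split μ, Finset.mul_sum]
    refine Finset.sum_le_sum fun j hj => ?_
    have hjn : j ≤ n := by simp [Nat.lt_succ_iff] at hj; exact hj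
    rw [← mul_assoc, mul_comm (64:ℝ), mul_assoc]
    refine mul_le_mul_of_nonneg_left ?_ (by positivity)
    rw [Finset.mul_sum]
    refine Finset.sum_le_sum fun x _ => ?_
    by_cases hs : sig n τ μ x = j
    · rw [if_pos hs, if_pos hs]
      have hsn : sig n τ μ x ≤ n := by omega
      have := sig_stop (τ := τ) (μ := μ) hsn
      rw [hs] at this
      linarith
    · simp [hs]
  -- Cauchy-Schwarz for Fst and Ffr
  have hFstCS : Fst ≤ Real.sqrt (tA * MA) := by
    rw [hFst, htA, hMA]
    have e : ∀ x : Fin n → Bool, (if sig n τ μ x ≤ n then Real.sqrt (τ x * μ x) else 0)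
        = Real.sqrt ((if sig n τ μ x ≤ n then τ x else 0) * (if sig n τ μ x ≤ n then μ x else 0)) := by
      intro x; by_cases hs : sig n τ μ x ≤ n <;> simp [hs]
    rw [Finset.sum_congr rfl fun x _ => e x]
    exact sum_sqrt_mul_le _ _ _ (fun x _ => by split <;> simp [hτ0 x])
      (fun x _ => by split <;> simp [hμ0' x])
  have hFfrCS : Ffr ≤ Real.sqrt ((1 - tA) * (1 - MA)) := by
    have e : ∀ x : Fin n → Bool, (if ¬ (sig n τ μ x ≤ n) then Real.sqrt (τ x * μ x) else 0)
        = Real.sqrt ((if ¬ (sig n τ μ x ≤ n) then τ x else 0) * (if ¬ (sig n τ μ x ≤ n) then μ x else 0)) := by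
      intro x; by_cases hs : sig n τ μ x ≤ n <;> simp [hs]
    have ht' : ∑ x, (if ¬ (sig n τ μ x ≤ n) then τ x else 0) = 1 - tA := by
      rw [htA, ← hτ1, ← Finset.sum_sub_distrib]
      refine Finset.sum_congr rfl fun x _ => ?_
      by_cases hs : sig n τ μ x ≤ n <;> simp [hs]
    have hm' : ∑ x, (if ¬ (sig n τ μ x ≤ n) then μ x else 0) = 1 - MA := by
      rw [hMA, ← hμ1, ← Finset.sum_sub_distrib]
      refine Finset.sum_congr rfl fun x _ => ?_
      by_cases hs : sig n τ μ x ≤ n <;> simp [hs]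
    rw [hFfr, Finset.sum_congr rfl fun x _ => e x, ← ht', ← hm']
    exact sum_sqrt_mul_le _ _ _ (fun x _ => by split <;> simp [hτ0 x])
      (fun x _ => by split <;> simp [hμ0' x])
  have hsqrt_tAMA : Real.sqrt (tA * MA) ≤ MA / 8 := by
    have h1 : tA * MA ≤ (MA/8)^2 := by nlinarith
    calc Real.sqrt (tA * MA) ≤ Real.sqrt ((MA/8)^2) := Real.sqrt_le_sqrt h1
      _ = MA / 8 := Real.sqrt_sq (by linarith)
  have hsqrt_fr : Real.sqrt ((1 - tA) * (1 - MA)) ≤ 1 - MA / 2 := by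
    have h1 : (1 - tA) * (1 - MA) ≤ (1 - MA/2)^2 := by nlinarith
    calc Real.sqrt ((1 - tA) * (1 - MA)) ≤ Real.sqrt ((1 - MA/2)^2) := Real.sqrt_le_sqrt h1
      _ = 1 - MA / 2 := Real.sqrt_sq (by linarith)
  -- lower bound on 1 - F via MA
  have hMA38 : 3/8 * MA ≤ 1 - F := by
    have : F ≤ MA / 8 + (1 - MA / 2) := by
      rw [hFsplit]
      have := hFstCS.trans hsqrt_tAMA
      have := hFfrCS.trans hsqrt_fr
      linarith
    linarith
  -- free part bounded by deltaChi
  set GN : ℕ → ℝ := fun j => if h : j < n then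
      (∑ x, τ x * chiSq (condP n τ ⟨j, h⟩ x) (condP n μ ⟨j, h⟩ x)) else 0 with hGN
  have hGNdelta : ∑ j ∈ Finset.range n, GN j = deltaChi n τ μ := by
    rw [← Fin.sum_univ_eq_sum_range GN n]
    unfold deltaChi
    refine Finset.sum_congr rfl fun i _ => ?_
    rw [hGN]
    simp only [i.isLt, dif_pos]
  have hfDsum : (∑ j ∈ Finset.range n, fD n τ μ j) ≤ 8 * deltaChi n τ μ := by
    rw [← hGNdelta, Finset.mul_sum]
    refine Finset.sum_le_sum fun j hjr => ?_
    have hj : j < n := Finset.mem_range.mp hjr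
    have hchi0 : ∀ x : Fin n → Bool,
        0 ≤ chiSq (condP n τ ⟨j, hj⟩ x) (condP n μ ⟨j, hj⟩ x) := fun x =>
      chiSq_nonneg (condP_nonneg hτ0 _ _) (condP_le_one hτ0 _ _)
          (condP_nonneg hμ0' _ _) (condP_le_one hμ0' _ _)
    have hHj0 : ∀ x : Fin n → Bool, 0 ≤ (if j < sig n τ μ x then
        chiSq (condP n τ ⟨j, hj⟩ x) (condP n μ ⟨j, hj⟩ x) else 0) := by
      intro x
      split
      · exact hchi0 x
      · exact le_rfl
    have hpoint : ∀ x : Fin n → Bool, (if j < sig n τ μ x then DkN n τ μ j x else 0)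
        ≤ pre n τ j x * (8 * (if j < sig n τ μ x then
            chiSq (condP n τ ⟨j, hj⟩ x) (condP n μ ⟨j, hj⟩ x) else 0)) := by
      intro x
      by_cases hs : j < sig n τ μ x
      · rw [if_pos hs, if_pos hs]
        have hfree := sig_free (τ := τ) (μ := μ) hs (le_of_lt hj)
        have := DkN_le hτ0 hμ0 hj x hfree
        linarith
      · rw [if_neg hs, if_neg hs]
        simp
    have hmeas : ∀ x y : Fin n → Bool, (∀ i : Fin n, (i : ℕ) < j → x i = y i) →
        (8 * (if j < sig n τ μ x then
            chiSq (condP n τ ⟨j, hj⟩ x) (condP n μ ⟨j, hj⟩ x) else 0))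
          = 8 * (if j < sig n τ μ y then
            chiSq (condP n τ ⟨j, hj⟩ y) (condP n μ ⟨j, hj⟩ y) else 0) := by
      intro x y hxy
      have h1 := lt_sig_congr (τ := τ) (μ := μ) (k := j) hxy
      have h2 : condP n τ ⟨j, hj⟩ x = condP n τ ⟨j, hj⟩ y := condP_congr hxy
      have h3 : condP n μ ⟨j, hj⟩ x = condP n μ ⟨j, hj⟩ y := condP_congr hxy
      by_cases hs : j < sig n τ μ x
      · rw [if_pos hs, if_pos (h1.mp hs), h2, h3]
      · rw [if_neg hs, if_neg (fun hc => hs (h1.mpr hc))]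
    have hgl := groupLem (ν := τ) (n - j) j (by omega)
      (fun x => 8 * (if j < sig n τ μ x then
        chiSq (condP n τ ⟨j, hj⟩ x) (condP n μ ⟨j, hj⟩ x) else 0)) hmeas
    have step1 : fD n τ μ j ≤ ((2:ℝ)^(n-j))⁻¹ * ∑ x, pre n τ j x * (8 * (if j < sig n τ μ x then
        chiSq (condP n τ ⟨j, hj⟩ x) (condP n μ ⟨j, hj⟩ x) else 0)) := by
      unfold fD
      refine mul_le_mul_of_nonneg_left ?_ (by positivity)
      exact Finset.sum_le_sum fun x _ => hpoint x
    have step3 : ∑ x, τ x * (8 * (if j < sig n τ μ x then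
        chiSq (condP n τ ⟨j, hj⟩ x) (condP n μ ⟨j, hj⟩ x) else 0)) ≤ 8 * GN j := by
      rw [hGN]
      simp only [hj, dif_pos]
      rw [Finset.mul_sum]
      refine Finset.sum_le_sum fun x _ => ?_
      by_cases hs : j < sig n τ μ x
      · rw [if_pos hs]; ring_nf; exact le_rfl
      · rw [if_neg hs]
        have := hchi0 x
        have := hτ0 x
        nlinarith
    calc fD n τ μ j ≤ ((2:ℝ)^(n-j))⁻¹ * ∑ x, pre n τ j x * (8 * (if j < sig n τ μ x then
          chiSq (condP n τ ⟨j, hj⟩ x) (condP n μ ⟨j, hj⟩ x) else 0)) := step1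
      _ = ∑ x, τ x * (8 * (if j < sig n τ μ x then
          chiSq (condP n τ ⟨j, hj⟩ x) (condP n μ ⟨j, hj⟩ x) else 0)) := hgl.symm
      _ ≤ 8 * GN j := step3
  -- stopped part: sum of stA ≤ sqrt (tA * MA)
  have hstACS : (∑ j ∈ Finset.range (n+1), stA n τ μ j) ≤ Real.sqrt (tA * MA) := by
    have e1 : ∀ j, stA n τ μ j = ∑ x, Real.sqrt
        ((((2:ℝ)^(n-j))⁻¹ * (if sig n τ μ x = j then pre n τ j x else 0))
          * (((2:ℝ)^(n-j))⁻¹ * (if sig n τ μ x = j then pre n μ j x else 0))) := by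
      intro j
      unfold stA
      rw [Finset.mul_sum]
      refine Finset.sum_congr rfl fun x _ => ?_
      by_cases hs : sig n τ μ x = j
      · rw [if_pos hs, if_pos hs, if_pos hs]
        unfold afn
        have c0 : (0:ℝ) ≤ ((2:ℝ)^(n-j))⁻¹ := by positivity
        rw [show (((2:ℝ)^(n-j))⁻¹ * pre n τ j x) * (((2:ℝ)^(n-j))⁻¹ * pre n μ j x)
            = (((2:ℝ)^(n-j))⁻¹ * ((2:ℝ)^(n-j))⁻¹) * (pre n τ j x * pre n μ j x) by ring]
        rw [Real.sqrt_mul (mul_nonneg c0 c0), Real.sqrt_mul_self c0]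
      · rw [if_neg hs, if_neg hs, if_neg hs]
        simp
    rw [Finset.sum_congr rfl fun j _ => e1 j]
    rw [← Finset.sum_product']
    have hb := sum_sqrt_mul_le ((Finset.range (n+1)) ×ˢ (Finset.univ : Finset (Fin n → Bool)))
      (fun p => ((2:ℝ)^(n-p.1))⁻¹ * (if sig n τ μ p.2 = p.1 then pre n τ p.1 p.2 else 0))
      (fun p => ((2:ℝ)^(n-p.1))⁻¹ * (if sig n τ μ p.2 = p.1 then pre n μ p.1 p.2 else 0))
      (fun p _ => by
        refine mul_nonneg (by positivity) ?_
        split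
        · exact pre_nonneg hτ0 _ _
        · exact le_rfl)
      (fun p _ => by
        refine mul_nonneg (by positivity) ?_
        split
        · exact pre_nonneg hμ0' _ _
        · exact le_rfl)
    refine hb.trans (Real.sqrt_le_sqrt ?_)
    have eT : ∑ p ∈ (Finset.range (n+1)) ×ˢ (Finset.univ : Finset (Fin n → Bool)),
        ((2:ℝ)^(n-p.1))⁻¹ * (if sig n τ μ p.2 = p.1 then pre n τ p.1 p.2 else 0) = tA := by
      rw [Finset.sum_product, htA, ind_split τ]
      refine Finset.sum_congr rfl fun j _ => ?_
      rw [Finset.mul_sum]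
    have eM : ∑ p ∈ (Finset.range (n+1)) ×ˢ (Finset.univ : Finset (Fin n → Bool)),
        ((2:ℝ)^(n-p.1))⁻¹ * (if sig n τ μ p.2 = p.1 then pre n μ p.1 p.2 else 0) = MA := by
      rw [Finset.sum_product, hMA, ind_split μ]
      refine Finset.sum_congr rfl fun j _ => ?_
      rw [Finset.mul_sum]
    rw [eT, eM]
  -- combine: 1 - F ≤ 12 deltaChi
  have hpsi : 1 - F ≤ 12 * deltaChi n τ μ := by
    have h1 : 1 - F ≤ (∑ j ∈ Finset.range n, fD n τ μ j)
        + (∑ j ∈ Finset.range (n+1), stA n τ μ j) := by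
      rw [hFsplit]
      have := hGT
      rw [htl] at this
      linarith
    have h2 : (∑ j ∈ Finset.range (n+1), stA n τ μ j) ≤ MA / 8 :=
      hstACS.trans hsqrt_tAMA
    have h3 : MA ≤ 8/3 * (1 - F) := by linarith
    have h4 : 1 - F ≤ 8 * deltaChi n τ μ + (8/3 * (1 - F)) / 8 := by
      calc 1 - F ≤ (∑ j ∈ Finset.range n, fD n τ μ j)
          + (∑ j ∈ Finset.range (n+1), stA n τ μ j) := h1
        _ ≤ 8 * deltaChi n τ μ + MA / 8 := by linarith
        _ ≤ 8 * deltaChi n τ μ + (8/3 * (1 - F)) / 8 := by linarith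
    linarith
  -- TV bound
  have hF0 : 0 ≤ F := Finset.sum_nonneg fun x _ => Real.sqrt_nonneg _
  have hF1 : F ≤ 1 := by
    rw [hF]
    have hptw : ∀ x : Fin n → Bool, Real.sqrt (τ x * μ x) ≤ (τ x + μ x) / 2 := by
      intro x
      have h1 : τ x * μ x ≤ ((τ x + μ x)/2)^2 := by nlinarith [sq_nonneg (τ x - μ x)]
      calc Real.sqrt (τ x * μ x) ≤ Real.sqrt (((τ x + μ x)/2)^2) := Real.sqrt_le_sqrt h1
        _ = (τ x + μ x) / 2 := Real.sqrt_sq (by nlinarith [hτ0 x, hμ0' x])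
    calc ∑ x, Real.sqrt (τ x * μ x) ≤ ∑ x, (τ x + μ x) / 2 :=
        Finset.sum_le_sum fun x _ => hptw x
      _ = 1 := by
        rw [← Finset.sum_div, Finset.sum_add_distrib, hτ1, hμ1]
        norm_num
  set T := tvDist τ μ with hT
  have h2T : 2 * T = ∑ x, |τ x - μ x| := by
    rw [hT, show tvDist τ μ = (1/2) * ∑ x, |τ x - μ x| from rfl]
    ring
  have habs : ∀ x : Fin n → Bool, |τ x - μ x|
      = |Real.sqrt (τ x) - Real.sqrt (μ x)| * (Real.sqrt (τ x) + Real.sqrt (μ x)) := by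
    intro x
    have e1 : τ x - μ x = (Real.sqrt (τ x) - Real.sqrt (μ x)) * (Real.sqrt (τ x) + Real.sqrt (μ x)) := by
      linear_combination Real.sq_sqrt (hμ0' x) - Real.sq_sqrt (hτ0 x)
    rw [e1, abs_mul, abs_of_nonneg (by positivity : (0:ℝ) ≤ Real.sqrt (τ x) + Real.sqrt (μ x))]
  have hCS := Finset.sum_mul_sq_le_sq_mul_sq Finset.univ
    (fun x => |Real.sqrt (τ x) - Real.sqrt (μ x)|) (fun x => Real.sqrt (τ x) + Real.sqrt (μ x))
  have eA : ∑ x, |Real.sqrt (τ x) - Real.sqrt (μ x)|^2 = 2 - 2*F := by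
    have hptw : ∀ x : Fin n → Bool, |Real.sqrt (τ x) - Real.sqrt (μ x)|^2
        = τ x + μ x - 2 * Real.sqrt (τ x * μ x) := by
      intro x
      rw [sq_abs, Real.sqrt_mul (hτ0 x)]
      linear_combination Real.sq_sqrt (hτ0 x) + Real.sq_sqrt (hμ0' x)
    rw [Finset.sum_congr rfl fun x _ => hptw x]
    rw [Finset.sum_sub_distrib, Finset.sum_add_distrib, hτ1, hμ1, ← Finset.mul_sum, ← hF]
    ring
  have eB : ∑ x, (Real.sqrt (τ x) + Real.sqrt (μ x))^2 = 2 + 2*F := by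
    have hptw : ∀ x : Fin n → Bool, (Real.sqrt (τ x) + Real.sqrt (μ x))^2
        = τ x + μ x + 2 * Real.sqrt (τ x * μ x) := by
      intro x
      rw [Real.sqrt_mul (hτ0 x)]
      linear_combination Real.sq_sqrt (hτ0 x) + Real.sq_sqrt (hμ0' x)
    rw [Finset.sum_congr rfl fun x _ => hptw x]
    rw [Finset.sum_add_distrib, Finset.sum_add_distrib, hτ1, hμ1, ← Finset.mul_sum, ← hF]
    ring
  have h2T' : ∑ x, |Real.sqrt (τ x) - Real.sqrt (μ x)| * (Real.sqrt (τ x) + Real.sqrt (μ x))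
      = 2*T := by
    rw [h2T]
    exact Finset.sum_congr rfl fun x _ => (habs x).symm
  rw [h2T', eA, eB] at hCS
  nlinarith [hCS, hF1, hF0, hpsi]

end final
end S8

theorem stmt_8 (n : ℕ) (μ τ : (Fin n → Bool) → ℝ)
    (hμ0 : ∀ x, 0 < μ x) (hμ1 : ∑ x, μ x = 1)
    (hτ0 : ∀ x, 0 ≤ τ x) (hτ1 : ∑ x, τ x = 1)
    (hne : τ ≠ μ) :
    deltaChi n τ μ ≥ (tvDist τ μ) ^ 2 / (24 * Real.logb 2 (2 * n / tvDist τ μ)) := by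
  classical
  have hn : 1 ≤ n := by
    rcases Nat.eq_zero_or_pos n with h0 | h
    · exfalso
      subst h0
      apply hne
      funext x
      have huniv : (Finset.univ : Finset (Fin 0 → Bool)) = {x} := by
        apply Finset.eq_singleton_iff_unique_mem.mpr
        exact ⟨Finset.mem_univ x, fun y _ => funext fun i => i.elim0⟩
      rw [huniv, Finset.sum_singleton] at hτ1 hμ1
      rw [hτ1, hμ1]
    · exact h
  have hTpos : 0 < tvDist τ μ := by
    have hx : ∃ x, τ x ≠ μ x := by
      by_contra h
      push_neg at h
      exact hne (funext h)
    obtain ⟨x, hx⟩ := hx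
    rw [show tvDist τ μ = (1/2) * ∑ y, |τ y - μ y| from rfl]
    have hpos : 0 < ∑ y, |τ y - μ y| :=
      Finset.sum_pos' (fun y _ => abs_nonneg _)
        ⟨x, Finset.mem_univ x, abs_pos.mpr (sub_ne_zero.mpr hx)⟩
    linarith
  have hT1 : tvDist τ μ ≤ 1 := by
    rw [show tvDist τ μ = (1/2) * ∑ y, |τ y - μ y| from rfl]
    have hstep : ∀ x : Fin n → Bool, |τ x - μ x| ≤ τ x + μ x := by
      intro x
      have h1 := hτ0 x
      have h2 := (hμ0 x).le
      exact abs_le.mpr ⟨by linarith, by linarith⟩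
    have hb : ∑ x, |τ x - μ x| ≤ 2 := by
      have hss := Finset.sum_le_sum (fun x (_ : x ∈ Finset.univ) => hstep x)
      rw [Finset.sum_add_distrib, hτ1, hμ1] at hss
      linarith
    linarith
  have hmain := S8.main_chain hμ0 hμ1 hτ0 hτ1
  have hΔ0 : 0 ≤ deltaChi n τ μ := by nlinarith [sq_nonneg (tvDist τ μ)]
  have h2n : (2:ℝ) ≤ 2 * n / tvDist τ μ := by
    rw [le_div_iff₀ hTpos]
    have hn' : (1:ℝ) ≤ n := by exact_mod_cast hn
    nlinarith
  have hL : 1 ≤ Real.logb 2 (2 * n / tvDist τ μ) := by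
    rw [show (1:ℝ) = Real.logb 2 2 from (Real.logb_self_eq_one (by norm_num)).symm]
    exact Real.logb_le_logb_of_le (by norm_num) (by norm_num) h2n
  have hden : (0:ℝ) < 24 * Real.logb 2 (2 * n / tvDist τ μ) := by linarith
  rw [ge_iff_le, div_le_iff₀ hden]
  nlinarith [hmain, mul_nonneg hΔ0 (by linarith : (0:ℝ) ≤ Real.logb 2 (2 * n / tvDist τ μ) - 1)]
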